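/- Let r, a, b be natural numbers and let A be a b × a matrix with entries in the polynomial ring MvPolynomial (Fin r) ℂ. For z : Fin r → ℂ let A(z) denote the complex matrix obtained by evaluating every entry of A at z. Then there exists a nonzero polynomial q : MvPolynomial (Fin r) ℂ such that for every z with q(z) ≠ 0 and every w : Fin r → ℂ, the rank of A(w) is at most the rank of A(z); i.e. the rank of A(z) is maximal on the nonvanishing locus of q. -/

import Mathlib

open Matrix Module

section aux

variable {K : Type*} [Field K]

/-- Rank of a submatrix is at most the rank of the matrix. -/
lemma aux_rank_submatrix_le {m n p q : ℕ} (M : Matrix (Fin m) (Fin n) K)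
    (f : Fin p → Fin m) (g : Fin q → Fin n) :
    (M.submatrix f g).rank ≤ M.rank := by
  classical
  have hfac : M.submatrix f g =
      (1 : Matrix (Fin m) (Fin m) K).submatrix f id *
        (M * (1 : Matrix (Fin n) (Fin n) K).submatrix id g) := by
    ext i j
    simp [Matrix.mul_apply, Matrix.one_apply, Finset.mul_sum, Finset.sum_ite_eq,
      Finset.sum_ite_eq']
  rw [hfac]
  exact le_trans (Matrix.rank_mul_le_right _ _) (Matrix.rank_mul_le_left _ _)

/-- A matrix of rank `R` has `R` columns which form a matrix of rank `R`. -/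
lemma aux_exists_cols {m n k : ℕ} (M : Matrix (Fin m) (Fin n) K) (hk : M.rank = k) :
    ∃ g : Fin k → Fin n, (M.submatrix id g).rank = k := by
  classical
  subst hk
  obtain ⟨s, hs_sub, hs_span, hs_li⟩ := exists_linearIndependent K (Set.range Mᵀ)
  have hfin : s.Finite := Set.Finite.subset (Set.finite_range Mᵀ) hs_sub
  haveI : Fintype s := hfin.fintype
  have hcard : s.toFinset.card = M.rank := by
    rw [Matrix.rank_eq_finrank_span_cols]
    change s.toFinset.card = finrank K (Submodule.span K (Set.range Mᵀ))
    rw [← hs_span]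
    exact (finrank_span_set_eq_card hs_li).symm
  -- choose, for each element of s, a column index
  have hchoice : ∀ x : s, ∃ j : Fin n, Mᵀ j = (x : Fin m → K) := fun x => hs_sub x.2
  choose c hc using hchoice
  obtain ⟨e⟩ : Nonempty (Fin M.rank ≃ s) := by
    rw [← hcard, Set.toFinset_card] at *
    exact ⟨(Fintype.equivFinOfCardEq rfl).symm⟩
  refine ⟨fun i => c (e i), ?_⟩
  have hrows : LinearIndependent K (fun i : Fin M.rank => Mᵀ (c (e i))) := by
    have : (fun i : Fin M.rank => Mᵀ (c (e i))) = (fun x : s => (x : Fin m → K)) ∘ e := by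
      funext i; simp [hc]
    rw [this]
    exact hs_li.comp e e.injective
  have hM : (Mᵀ.submatrix (fun i => c (e i)) id) = fun i : Fin M.rank => Mᵀ (c (e i)) := by
    ext i j; rfl
  have h1 : (Mᵀ.submatrix (fun i => c (e i)) id).rank = M.rank := by
    have := hrows.rank_matrix (M := Mᵀ.submatrix (fun i => c (e i)) id)
    · rw [this, Fintype.card_fin]
  calc (M.submatrix id fun i => c (e i)).rank
      = (M.submatrix id fun i => c (e i))ᵀ.rank := (Matrix.rank_transpose _).symm
    _ = M.rank := by rw [Matrix.transpose_submatrix]; exact h1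

/-- A square matrix of full rank has nonzero determinant. -/
lemma aux_det_ne_zero {R : ℕ} (C : Matrix (Fin R) (Fin R) K) (h : C.rank = R) :
    C.det ≠ 0 := by
  classical
  intro hdet
  obtain ⟨v, hv, hmv⟩ := (Matrix.exists_mulVec_eq_zero_iff (M := C)).mpr hdet
  have hker : finrank K (LinearMap.ker C.mulVecLin) ≠ 0 := by
    have : Nontrivial (LinearMap.ker C.mulVecLin) := by
      refine ⟨⟨⟨v, ?_⟩, 0, ?_⟩⟩
      · simpa [Matrix.mulVecLin] using hmv
      · simpa using hv
    have h1 : 0 < finrank K (LinearMap.ker C.mulVecLin) :=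
      Module.finrank_pos_iff.mpr ‹_›
    omega
  have hsum := LinearMap.finrank_range_add_finrank_ker C.mulVecLin
  rw [Module.finrank_fintype_fun_eq_card, Fintype.card_fin] at hsum
  have : C.rank = finrank K (LinearMap.range C.mulVecLin) := rfl
  omega

/-- A matrix of rank `k` has a `k × k` submatrix with nonzero determinant. -/
lemma aux_exists_minor {m n k : ℕ} (M : Matrix (Fin m) (Fin n) K) (hk : M.rank = k) :
    ∃ (f : Fin k → Fin m) (g : Fin k → Fin n), (M.submatrix f g).det ≠ 0 := by
  obtain ⟨g, hg⟩ := aux_exists_cols M hk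
  have hT : (M.submatrix id g)ᵀ.rank = k := by rw [Matrix.rank_transpose]; exact hg
  obtain ⟨f, hf⟩ := aux_exists_cols _ hT
  refine ⟨f, g, ?_⟩
  have hEq : (M.submatrix id g)ᵀ.submatrix id f = (M.submatrix f g)ᵀ := by
    ext i j; rfl
  have := aux_det_ne_zero _ hf
  rw [hEq, Matrix.det_transpose] at this
  exact this

end aux

/-- Semicontinuity of the rank of a matrix of polynomials: for a matrix `A` with entries in
`ℂ[z₁,…,z_r]` there is a nonzero polynomial `q` such that the rank of the evaluated matrix
`A(z)` is maximal whenever `q(z) ≠ 0`. -/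
theorem exists_generic_rank_locus
    (r a b : ℕ) (A : Matrix (Fin b) (Fin a) (MvPolynomial (Fin r) ℂ)) :
    ∃ q : MvPolynomial (Fin r) ℂ, q ≠ 0 ∧
      ∀ z : Fin r → ℂ, MvPolynomial.eval z q ≠ 0 →
        ∀ w : Fin r → ℂ,
          (A.map (MvPolynomial.eval w)).rank ≤ (A.map (MvPolynomial.eval z)).rank := by
  classical
  set F : (Fin r → ℂ) → ℕ := fun z => (A.map (MvPolynomial.eval z)).rank with hF
  have hbdd : ∀ z, F z ≤ a := fun z => Matrix.rank_le_width _
  have hS : sSup (Set.range F) ∈ Set.range F :=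
    Nat.sSup_mem ⟨F 0, ⟨0, rfl⟩⟩ ⟨a, by rintro x ⟨z, rfl⟩; exact hbdd z⟩
  obtain ⟨z₀, hz₀⟩ := hS
  have hmax : ∀ w, F w ≤ F z₀ := by
    intro w
    have hub : BddAbove (Set.range F) := ⟨a, by rintro x ⟨z, rfl⟩; exact hbdd z⟩
    have := le_csSup hub (Set.mem_range_self w)
    omega
  obtain ⟨f, g, hdet⟩ := aux_exists_minor (A.map (MvPolynomial.eval z₀)) rfl
  refine ⟨(A.submatrix f g).det, ?_, ?_⟩
  · intro hq
    apply hdet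
    have : MvPolynomial.eval z₀ (A.submatrix f g).det
        = ((A.map (MvPolynomial.eval z₀)).submatrix f g).det := by
      rw [RingHom.map_det]
      rfl
    rw [← this, hq, map_zero]
  · intro z hz w
    have hdz : ((A.map (MvPolynomial.eval z)).submatrix f g).det ≠ 0 := by
      have : MvPolynomial.eval z (A.submatrix f g).det
          = ((A.map (MvPolynomial.eval z)).submatrix f g).det := by
        rw [RingHom.map_det]
        rfl
      rw [← this]
      exact hz
    have hunit : IsUnit ((A.map (MvPolynomial.eval z)).submatrix f g) :=
      (Matrix.isUnit_iff_isUnit_det _).mpr (isUnit_iff_ne_zero.mpr hdz)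
    have hrk : ((A.map (MvPolynomial.eval z)).submatrix f g).rank = F z₀ :=
      Matrix.rank_of_isUnit _ hunit |>.trans (Fintype.card_fin _)
    calc F w ≤ F z₀ := hmax w
      _ = ((A.map (MvPolynomial.eval z)).submatrix f g).rank := hrk.symm
      _ ≤ F z := aux_rank_submatrix_le _ f g
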